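/- arXiv:0904.0104 — 12 statements merged into one kernel-verified Lean document; each statement's English description precedes it below -/
import Mathlib

section
/- For every integer n ≥ 4, f_n(1) > 0. -/
noncomputable def f (n x : ℝ) : ℝ :=
  -524288*n
  + 262144*(n+3)*(2*n-1)*x
  + 65536*(-2*n^3-43*n^2+49*n+27)*x^2
  + 16384*(2*n-1)*(62*n^2+31*n-345)*x^3
  + 2048*(-192*n^4-2332*n^3+8284*n^2-1023*n-6480)*x^4
  + 2048*(2*n-5)*(2*n-1)*(382*n^2+191*n-1605)*x^5
  + 256*(2*n-5)*(-920*n^4-9444*n^3+30262*n^2+5521*n-30240)*x^6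
  + 64*(2*n-5)^2*(2*n-1)*(4898*n^2+2449*n-15567)*x^7
  + 8*(2*n-5)^2*(-9024*n^4-89124*n^3+269348*n^2+71119*n-274320)*x^8
  + 12*(2*n-5)^3*(2*n-1)*(5934*n^2+2967*n-14017)*x^9
  + (2*n-5)^3*(-12004*n^4-126480*n^3+377253*n^2+34744*n-300735)*x^10
  + 3*(2*n-5)^4*(2*n-1)*(3078*n^2+1539*n-5155)*x^11
  + 3*(2*n-5)^4*(-344*n^4-4422*n^3+13645*n^2-4565*n-4442)*x^12
  + 6*(2*n-5)^5*(2*n-1)*(106*n^2+53*n-113)*x^13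
  + 3*(2*n-5)^5*(-12*n^4-252*n^3+845*n^2-830*n+311)*x^14
  + 9*(n+1)*(2*n-5)^6*(2*n-1)^2*x^15
  + 3*(2*n-5)^6*(3*n-4)*(-2*n^2+5*n-7)*x^16

theorem stmt_1 (n : ℤ) (hn : 4 ≤ n) : 0 < f (n : ℝ) 1 := by
  have hm : (0:ℝ) ≤ (n:ℝ) - 4 := by
    have : (4:ℝ) ≤ (n:ℝ) := by exact_mod_cast hn
    linarith
  set m : ℝ := (n:ℝ) - 4 with hmdef
  have key : f (n : ℝ) 1 = 1356912 + 6602904*m + 12213192*m^2 + 11500064*m^3 + 6146336*m^4 + 1944192*m^5 + 360832*m^6 + 36352*m^7 + 1536*m^8 := by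
    simp only [f, hmdef]; ring
  rw [key]
  have h2 := pow_nonneg hm 2
  have h3 := pow_nonneg hm 3
  have h4 := pow_nonneg hm 4
  have h5 := pow_nonneg hm 5
  have h6 := pow_nonneg hm 6
  have h7 := pow_nonneg hm 7
  have h8 := pow_nonneg hm 8
  nlinarith [hm]
end

section
/- For every integer n ≥ 5, f_n(17/10) < 0. -/
theorem stmt_2 (n : ℤ) (hn : 5 ≤ n) : f (n : ℝ) (17/10) < 0 := by
  have hm : (0:ℝ) ≤ (n:ℝ) - 5 := by
    have : (5:ℝ) ≤ (n:ℝ) := by exact_mod_cast hn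
    linarith
  have key : f (n : ℝ) (17/10) = (-38007351551614400919/160000000000) + (-11979125462620201120857/3200000000000)*((n:ℝ)-5)^1 + (-33168617289717787047493/3200000000000)*((n:ℝ)-5)^2 + (-105508391769525646664861/8000000000000)*((n:ℝ)-5)^3 + (-191863028363188872171797/20000000000000)*((n:ℝ)-5)^4 + (-1081868540023095144876749/250000000000000)*((n:ℝ)-5)^5 + (-773341610605990747432819/625000000000000)*((n:ℝ)-5)^6 + (-68409957390659190462271/312500000000000)*((n:ℝ)-5)^7 + (-3423890857928001400851/156250000000000)*((n:ℝ)-5)^8 + (-74254621512695809689/78125000000000)*((n:ℝ)-5)^9 := by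
    unfold f; ring
  rw [key]
  have h1 : (0:ℝ) ≤ ((n:ℝ)-5)^1 := pow_nonneg hm 1
  have h2 : (0:ℝ) ≤ ((n:ℝ)-5)^2 := pow_nonneg hm 2
  have h3 : (0:ℝ) ≤ ((n:ℝ)-5)^3 := pow_nonneg hm 3
  have h4 : (0:ℝ) ≤ ((n:ℝ)-5)^4 := pow_nonneg hm 4
  have h5 : (0:ℝ) ≤ ((n:ℝ)-5)^5 := pow_nonneg hm 5
  have h6 : (0:ℝ) ≤ ((n:ℝ)-5)^6 := pow_nonneg hm 6
  have h7 : (0:ℝ) ≤ ((n:ℝ)-5)^7 := pow_nonneg hm 7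
  have h8 : (0:ℝ) ≤ ((n:ℝ)-5)^8 := pow_nonneg hm 8
  have h9 : (0:ℝ) ≤ ((n:ℝ)-5)^9 := pow_nonneg hm 9
  linarith
end

section
/- For every integer n ≥ 5, there exists a real number x with 1 < x < 17/10 such that f_n(x) = 0. -/
lemma f_cont (n : ℝ) : Continuous (fun x => f n x) := by
  unfold f; continuity

lemma f_one_pos (n : ℝ) (hn : (5:ℝ) ≤ n) : 0 < f n 1 := by
  have hm : (0:ℝ) ≤ n - 5 := by linarith
  have key : f n 1 = 40162320 + 102267528*(n-5) + 109252200*(n-5)^2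
      + 64102304*(n-5)^3 + 22659616*(n-5)^4 + 4958592*(n-5)^5
      + 658304*(n-5)^6 + 48640*(n-5)^7 + 1536*(n-5)^8 := by
    unfold f; ring
  rw [key]
  positivity

lemma f_seventeen_neg (n : ℝ) (hn : (5:ℝ) ≤ n) : f n (17/10) < 0 := by
  have hm : (0:ℝ) ≤ n - 5 := by linarith
  have key : f n (17/10) * 10^16 =
      -(2375459471975900057437500 + 37434767070688128502678125*(n-5)
      + 103651929030368084523415625*(n-5)^2 + 131885489711907058331076250*(n-5)^3
      + 95931514181594436085898500*(n-5)^4 + 43274741600923805795069960*(n-5)^5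
      + 12373465769695851958925104*(n-5)^6 + 2189118636501094094792672*(n-5)^7
      + 219129014907392089654464*(n-5)^8 + 9504591553625063640192*(n-5)^9) := by
    unfold f; ring
  nlinarith [pow_nonneg hm 2, pow_nonneg hm 3, pow_nonneg hm 4, pow_nonneg hm 5,
    pow_nonneg hm 6, pow_nonneg hm 7, pow_nonneg hm 8, pow_nonneg hm 9]

theorem stmt_3 (n : ℤ) (hn : 5 ≤ n) :
    ∃ x : ℝ, 1 < x ∧ x < 17/10 ∧ f (n : ℝ) x = 0 := by
  have hn' : (5:ℝ) ≤ (n:ℝ) := by exact_mod_cast hn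
  have h1 : 0 < f (n:ℝ) 1 := f_one_pos _ hn'
  have h2 : f (n:ℝ) (17/10) < 0 := f_seventeen_neg _ hn'
  have hle : (1:ℝ) ≤ 17/10 := by norm_num
  have := intermediate_value_Ioo' hle (f_cont (n:ℝ)).continuousOn
    (a := 1) (b := 17/10)
  have h0 : (0:ℝ) ∈ Set.Ioo (f (n:ℝ) (17/10)) (f (n:ℝ) 1) := ⟨h2, h1⟩
  obtain ⟨x, hx, hfx⟩ := this h0
  exact ⟨x, hx.1, hx.2, hfx⟩
end

section
/- There exists a real number x with 1 < x < 5/3 such that p₆(x) = 0. -/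
noncomputable def p6 (x : ℝ) : ℝ :=
  94860*x^16 - 468000*x^15 + 1562520*x^14 - 4008000*x^13 + 8070115*x^12
  - 13885480*x^11 + 20117227*x^10 - 25245080*x^9 + 27575870*x^8
  - 25883264*x^7 + 21320504*x^6 - 14780736*x^5 + 8807200*x^4
  - 4242816*x^3 + 1608048*x^2 - 445824*x + 59616

theorem stmt_8 : ∃ x : ℝ, 1 < x ∧ x < 5/3 ∧ p6 x = 0 := by
  have hc : Continuous p6 := by unfold p6; fun_prop
  have h := intermediate_value_Ioo' (a := (5/4 : ℝ)) (b := 4/3) (by norm_num)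
    hc.continuousOn
  have h0 : (0 : ℝ) ∈ Set.Ioo (p6 (4/3)) (p6 (5/4)) := by
    constructor <;> · unfold p6; norm_num
  obtain ⟨x, hx, hfx⟩ := h h0
  exact ⟨x, by linarith [hx.1], by linarith [hx.2], hfx⟩
end

section
/- The polynomial p₆ has at least four distinct real roots in the open interval (0, 2). -/
lemma p6_cont : Continuous p6 := by unfold p6; continuity

lemma root_between {a b : ℝ} (hab : a ≤ b) (h : (0:ℝ) ∈ Set.Ioo (p6 a) (p6 b) ∨ (0:ℝ) ∈ Set.Ioo (p6 b) (p6 a)) :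
    ∃ x ∈ Set.Ioo a b, p6 x = 0 := by
  rcases h with h | h
  · have := intermediate_value_Ioo hab p6_cont.continuousOn h
    obtain ⟨x, hx, hx0⟩ := this
    exact ⟨x, hx, hx0⟩
  · have := intermediate_value_Ioo' hab p6_cont.continuousOn h
    obtain ⟨x, hx, hx0⟩ := this
    exact ⟨x, hx, hx0⟩

theorem stmt_9 :
    ∃ a b c d : ℝ, 0 < a ∧ a < b ∧ b < c ∧ c < d ∧ d < 2 ∧
      p6 a = 0 ∧ p6 b = 0 ∧ p6 c = 0 ∧ p6 d = 0 := by
  obtain ⟨a, ha, ha0⟩ := root_between (show (0.3:ℝ) ≤ 0.4 by norm_num)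
    (Or.inr ⟨by unfold p6; norm_num, by unfold p6; norm_num⟩)
  obtain ⟨b, hb, hb0⟩ := root_between (show (0.45:ℝ) ≤ 0.5 by norm_num)
    (Or.inl ⟨by unfold p6; norm_num, by unfold p6; norm_num⟩)
  obtain ⟨c, hc, hc0⟩ := root_between (show (1.2:ℝ) ≤ 1.3 by norm_num)
    (Or.inr ⟨by unfold p6; norm_num, by unfold p6; norm_num⟩)
  obtain ⟨d, hd, hd0⟩ := root_between (show (1.6:ℝ) ≤ 1.65 by norm_num)
    (Or.inl ⟨by unfold p6; norm_num, by unfold p6; norm_num⟩)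
  exact ⟨a, b, c, d, by linarith [ha.1], by linarith [ha.2, hb.1], by linarith [hb.2, hc.1],
    by linarith [hc.2, hd.1], by linarith [hd.2], ha0, hb0, hc0, hd0⟩
end

section
/- The polynomial p₇ has at least four distinct real roots in the open interval (0, 2). -/
noncomputable def p7 (x : ℝ) : ℝ :=
  24313856*x^16 - 128581632*x^15 + 482637824*x^14 - 1357332480*x^13
  + 3043447808*x^12 - 5804421120*x^11 + 9347615296*x^10 - 13107483648*x^9
  + 15962982496*x^8 - 16875749376*x^7 + 15608426188*x^6 - 12310144128*x^5
  + 8333330528*x^4 - 4638529008*x^3 + 2039329151*x^2 - 672320880*x + 114663500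

lemma p7_cont : Continuous p7 := by
  unfold p7; continuity

lemma p7_root_down (l r : ℝ) (h : l ≤ r) (hl : 0 < p7 l) (hr : p7 r < 0) :
    ∃ x ∈ Set.Ioo l r, p7 x = 0 := by
  have := intermediate_value_Ioo' h (p7_cont.continuousOn)
  have h0 : (0:ℝ) ∈ Set.Ioo (p7 r) (p7 l) := ⟨hr, hl⟩
  obtain ⟨x, hx, hx0⟩ := this h0
  exact ⟨x, hx, hx0⟩

lemma p7_root_up (l r : ℝ) (h : l ≤ r) (hl : p7 l < 0) (hr : 0 < p7 r) :
    ∃ x ∈ Set.Ioo l r, p7 x = 0 := by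
  have := intermediate_value_Ioo h (p7_cont.continuousOn)
  have h0 : (0:ℝ) ∈ Set.Ioo (p7 l) (p7 r) := ⟨hl, hr⟩
  obtain ⟨x, hx, hx0⟩ := this h0
  exact ⟨x, hx, hx0⟩

theorem stmt_10 :
    ∃ a b c d : ℝ, 0 < a ∧ a < b ∧ b < c ∧ c < d ∧ d < 2 ∧
      p7 a = 0 ∧ p7 b = 0 ∧ p7 c = 0 ∧ p7 d = 0 := by
  obtain ⟨a, ⟨ha1, ha2⟩, ha0⟩ := p7_root_down 0.5 0.6 (by norm_num)
    (by unfold p7; norm_num) (by unfold p7; norm_num)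
  obtain ⟨b, ⟨hb1, hb2⟩, hb0⟩ := p7_root_up 0.6 0.7 (by norm_num)
    (by unfold p7; norm_num) (by unfold p7; norm_num)
  obtain ⟨c, ⟨hc1, hc2⟩, hc0⟩ := p7_root_down 1.2 1.3 (by norm_num)
    (by unfold p7; norm_num) (by unfold p7; norm_num)
  obtain ⟨d, ⟨hd1, hd2⟩, hd0⟩ := p7_root_up 1.5 1.6 (by norm_num)
    (by unfold p7; norm_num) (by unfold p7; norm_num)
  exact ⟨a, b, c, d, by linarith, by linarith, by linarith, by linarith, by linarith,
    ha0, hb0, hc0, hd0⟩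
end

section
/- The polynomial Q(x) = 11904x^8 − 30720x^7 + 56144x^6 − 86400x^5 + 80752x^4 − 79440x^3 + 42853x^2 − 23850x + 6293 satisfies Q(0) > 0, Q(1) < 0 and Q(2) > 0; consequently Q has at least two distinct positive real roots, one in the open interval (0, 1) and one in the open interval (1, 2). -/
noncomputable def Q (x : ℝ) : ℝ :=
  11904*x^8 - 30720*x^7 + 56144*x^6 - 86400*x^5 + 80752*x^4
  - 79440*x^3 + 42853*x^2 - 23850*x + 6293

lemma Qcont : Continuous Q := by
  unfold Q; continuity

theorem stmt_12 :
    0 < Q 0 ∧ Q 1 < 0 ∧ 0 < Q 2 ∧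
    ∃ a b : ℝ, 0 < a ∧ a < 1 ∧ Q a = 0 ∧ 1 < b ∧ b < 2 ∧ Q b = 0 := by
  have h0 : Q 0 = 6293 := by norm_num [Q]
  have h1 : Q 1 = -22464 := by norm_num [Q]
  have h2 : Q 2 = 730197 := by norm_num [Q]
  refine ⟨by norm_num [h0], by norm_num [h1], by norm_num [h2], ?_⟩
  have ha : ∃ a ∈ Set.Ioo (0:ℝ) 1, Q a = 0 := by
    have := intermediate_value_Ioo' (le_of_lt one_pos) (Qcont.continuousOn (s := Set.Icc 0 1))
    exact this ⟨by norm_num [h1], by norm_num [h0]⟩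
  have hb : ∃ b ∈ Set.Ioo (1:ℝ) 2, Q b = 0 := by
    have := intermediate_value_Ioo (by norm_num : (1:ℝ) ≤ 2) (Qcont.continuousOn (s := Set.Icc 1 2))
    exact this ⟨by norm_num [h1], by norm_num [h2]⟩
  obtain ⟨a, ⟨ha1, ha2⟩, haQ⟩ := ha
  obtain ⟨b, ⟨hb1, hb2⟩, hbQ⟩ := hb
  exact ⟨a, b, ha1, ha2, haQ, hb1, hb2, hbQ⟩
end

section
/- Let u₀, u₁, u₂, x, e be positive real numbers with 6x^4 + 3x^2 − 4 ≠ 0, satisfying the five equations: (i) −u₀ + 8ex^2 − u₀x^2 = 0; (ii) −u₁^2 − 5x^2 + 48eu₁x^2 − 6u₁^2x^2 = 0; (iii) −1 + 24eu₂ − 5u₂^2 = 0; (iv) −80 + 160e + u₀ + 24u₁ + 5u₂ + 10x = 0; (v) u₀ + 4u₁ − 10x + 40ex^2 − 5x^3 = 0. Then either (u₀ = x and u₁ = x), or p₆(x) = 0, where p₆(x) = 94860x^16 − 468000x^15 + 1562520x^14 − 4008000x^13 + 8070115x^12 − 13885480x^11 + 20117227x^10 − 25245080x^9 + 27575870x^8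 − 25883264x^7 + 21320504x^6 − 14780736x^5 + 8807200x^4 − 4242816x^3 + 1608048x^2 − 445824x + 59616. -/
theorem stmt_14 (u₀ u₁ u₂ x e : ℝ)
    (hu₀ : 0 < u₀) (hu₁ : 0 < u₁) (hu₂ : 0 < u₂) (hx : 0 < x) (he : 0 < e)
    (hnd : 6*x^4 + 3*x^2 - 4 ≠ 0)
    (h1 : -u₀ + 8*e*x^2 - u₀*x^2 = 0)
    (h2 : -u₁^2 - 5*x^2 + 48*e*u₁*x^2 - 6*u₁^2*x^2 = 0)
    (h3 : -1 + 24*e*u₂ - 5*u₂^2 = 0)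
    (h4 : -80 + 160*e + u₀ + 24*u₁ + 5*u₂ + 10*x = 0)
    (h5 : u₀ + 4*u₁ - 10*x + 40*e*x^2 - 5*x^3 = 0) :
    (u₀ = x ∧ u₁ = x) ∨ p6 x = 0 := by
  by_cases hcase : u₀ = x
  · left
    subst hcase
    exact ⟨rfl, by linear_combination (1/4)*h5 - (5/4)*h1⟩
  · right
    have key1 : (u₀ - x) * ((180+540*x^2+505*x^4+150*x^6)*u₀
        - (180*x+700*x^3+625*x^5+150*x^7)) = 0 := by
      linear_combination (-16)*h2 + 96*u₁*h1
        - ((1+6*x^2)*(4*u₁+10*x+5*x^3-6*u₀-5*u₀*x^2) - 24*u₀*(1+x^2))*h5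
        + 5*((1+6*x^2)*(4*u₁+10*x+5*x^3-6*u₀-5*u₀*x^2) - 24*u₀*(1+x^2))*h1
    rcases mul_eq_zero.mp key1 with h | hlin
    · exact absurd (sub_eq_zero.mp h) hcase
    · have h4000 : (4000:ℝ)*x^2 ≠ 0 := by positivity
      have hk : 4000*x^2*(94860*x^16 - 468000*x^15 + 1562520*x^14 - 4008000*x^13 + 8070115*x^12
          - 13885480*x^11 + 20117227*x^10 - 25245080*x^9 + 27575870*x^8
          - 25883264*x^7 + 21320504*x^6 - 14780736*x^5 + 8807200*x^4
          - 4242816*x^3 + 1608048*x^2 - 445824*x + 59616) = 0 := by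
        linear_combination
          ((180+540*x^2+505*x^4+150*x^6)^2)*(-80*x^4)*h3
          + ((180+540*x^2+505*x^4+150*x^6)^2)*(240*x^2*u₂
              + 80*(20*u₂*x^2 + (320*x^2-80*u₀-84*u₀*x^2-96*u₁*x^2-40*x^3) - 12*u₀*(1+x^2))
              - 120*x^2*(2*(320*x^2-80*u₀-84*u₀*x^2-96*u₁*x^2-40*x^3)
                + 24*x^2*(4*u₁-10*x-5*x^3+6*u₀+5*u₀*x^2) - 12*u₀*(1+x^2)))*h1
          + ((180+540*x^2+505*x^4+150*x^6)^2)*(-4*x^2*(20*u₂*x^2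
              + (320*x^2-80*u₀-84*u₀*x^2-96*u₁*x^2-40*x^3) - 12*u₀*(1+x^2)))*h4
          + ((180+540*x^2+505*x^4+150*x^6)^2)*(24*x^2*(2*(320*x^2-80*u₀-84*u₀*x^2-96*u₁*x^2-40*x^3)
              + 24*x^2*(4*u₁-10*x-5*x^3+6*u₀+5*u₀*x^2) - 12*u₀*(1+x^2)))*h5
          + ((7360-9360*x^2-17760*x^4+12960*x^6+14400*x^8)*(-(180*x+700*x^3+625*x^5+150*x^7)
              - (180+540*x^2+505*x^4+150*x^6)*u₀)
            - (-55040*x^2+48160*x^3+34560*x^4-9600*x^5+76800*x^6-80160*x^7-28800*x^9)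
              *(180+540*x^2+505*x^4+150*x^6))*hlin
      unfold p6
      rcases mul_eq_zero.mp hk with h | h
      · exact absurd h h4000
      · exact h
end

section
/- Let u₀, u₁, u₂, x, e be positive real numbers with 20x^4 + 11x^2 − 20 ≠ 0, satisfying the five equations: (i) −5u₀ + 36ex^2 − 4u₀x^2 = 0; (ii) −u₁^2 − 4x^2 + 36eu₁x^2 − 4u₁^2x^2 = 0; (iii) −1 + 36eu₂ − 8u₂^2 = 0; (iv) −144 + 288e + u₀ + 45u₁ + 6u₂ + 20x = 0; (v) u₀ + 9u₁ − 20x + 72ex^2 − 8x^3 = 0. Then either (u₀ = x and u₁ = x), or p₇(x) = 0, where p₇(x) = 24313856x^16 − 128581632x^15 + 482637824x^14 − 1357332480x^13 + 3043447808x^12 − 5804421120x^11 + 9347615296x^10 − 13107483648x^9 + 15962982496x^8 − 16875749376x^7 + 15608426188x^6 − 12310144128x^5 + 8333330528x^4 − 4638529008x^3 + 2039329151x^2 − 672320880x + 114663500. -/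
theorem stmt_15 (u₀ u₁ u₂ x e : ℝ)
    (hu₀ : 0 < u₀) (hu₁ : 0 < u₁) (hu₂ : 0 < u₂) (hx : 0 < x) (he : 0 < e)
    (hnd : 20*x^4 + 11*x^2 - 20 ≠ 0)
    (h1 : -5*u₀ + 36*e*x^2 - 4*u₀*x^2 = 0)
    (h2 : -u₁^2 - 4*x^2 + 36*e*u₁*x^2 - 4*u₁^2*x^2 = 0)
    (h3 : -1 + 36*e*u₂ - 8*u₂^2 = 0)
    (h4 : -144 + 288*e + u₀ + 45*u₁ + 6*u₂ + 20*x = 0)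
    (h5 : u₀ + 9*u₁ - 20*x + 72*e*x^2 - 8*x^3 = 0) :
    (u₀ = x ∧ u₁ = x) ∨ p7 x = 0 := by

  have hx0 : x ≠ 0 := ne_of_gt hx
  have hx2 : (x:ℝ)^2 ≠ 0 := pow_ne_zero 2 hx0
  have key : (u₀ - x) * (((64:ℝ)*x^6 + (264:ℝ)*x^4 + (354:ℝ)*x^2 + (154:ℝ))*u₀ - ((64:ℝ)*x^7 + (336:ℝ)*x^5 + (480:ℝ)*x^3 + (181:ℝ)*x)) = 0 := by
    have hk : x^2 * ((u₀ - x) * (((64:ℝ)*x^6 + (264:ℝ)*x^4 + (354:ℝ)*x^2 + (154:ℝ))*u₀ - ((64:ℝ)*x^7 + (336:ℝ)*x^5 + (480:ℝ)*x^3 + (181:ℝ)*x))) = 0 := by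
      linear_combination ((-16:ℝ)*u₀*x^6 + (-44:ℝ)*u₀*x^4 + (-28:ℝ)*u₀*x^2 + (18:ℝ)*u₁*x^4 + (99/4:ℝ)*u₁*x^2 + (16:ℝ)*x^7 + (44:ℝ)*x^5 + (10:ℝ)*x^3)*h1 + ((-81/4:ℝ)*x^2)*h2 + ((8:ℝ)*u₀*x^6 + (22:ℝ)*u₀*x^4 + (14:ℝ)*u₀*x^2 + (-9:ℝ)*u₁*x^4 + (-9/4:ℝ)*u₁*x^2 + (-8:ℝ)*x^7 + (-22:ℝ)*x^5 + (-5:ℝ)*x^3)*h5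
    exact (mul_eq_zero.mp hk).resolve_left hx2
  rcases mul_eq_zero.mp key with h0 | hL
  · left
    have hu0x : u₀ = x := by linarith [sub_eq_zero.mp h0]
    refine ⟨hu0x, ?_⟩
    subst hu0x
    linear_combination (1/9:ℝ)*h5 - (2/9:ℝ)*h1
  · right
    have hp : x^2 * p7 x = 0 := by
      unfold p7
      linear_combination ((-3276800:ℝ)*u₀*x^18 + (-25886720:ℝ)*u₀*x^16 + (-77428736:ℝ)*u₀*x^14 + (-93757952:ℝ)*u₀*x^12 + (12542912:ℝ)*u₀*x^10 + (148198016:ℝ)*u₀*x^8 + (124997732:ℝ)*u₀*x^6 + (-1818152:ℝ)*u₀*x^4 + (-46701116:ℝ)*u₀*x^2 + (-16601200:ℝ)*u₀ + (3686400:ℝ)*u₁*x^16 + (30412800:ℝ)*u₁*x^14 + (103507200:ℝ)*u₁*x^12 + (185961600:ℝ)*u₁*x^10 + (185965200:ℝ)*u₁*x^8 + (98128800:ℝ)*u₁*x^6 + (21344400:ℝ)*u₁*x^4 + (3276800:ℝ)*x^19 + (33013760:ℝ)*x^17 + (49397760:ℝ)*x^16*e + (-23592960:ℝ)*x^16 +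 (124876800:ℝ)*x^15 + (386887680:ℝ)*x^14*e + (-174882816:ℝ)*x^14 + (197367040:ℝ)*x^13 + (1216684800:ℝ)*x^12*e + (-499433472:ℝ)*x^12 + (4641280:ℝ)*x^11 + (1912245120:ℝ)*x^10*e + (-635355648:ℝ)*x^10 + (-441726000:ℝ)*x^9 + (1450548720:ℝ)*x^8*e + (-193423104:ℝ)*x^8 + (-652485040:ℝ)*x^7 + (273520800:ℝ)*x^6*e + (368749152:ℝ)*x^6 + (-403683280:ℝ)*x^5 + (-263506320:ℝ)*x^4*e + (389366208:ℝ)*x^4 + (-95338320:ℝ)*x^3 + (-119528640:ℝ)*x^2*e + (114405984:ℝ)*x^2)*h1 + ((-36864:ℝ)*x^16 + (-304128:ℝ)*x^14 + (-1035072:ℝ)*x^12 + (-1859616:ℝ)*x^10 + (-1859652:ℝ)*x^8 + (-981288:ℝ)*x^6 + (-213444:ℝ)*x^4)*h3 + ((8192:ℝ)*u₀*x^16 + (67584:ℝ)*u₀*x^14 + (230016:ℝ)*u₀*x^12 + (413248:ℝ)*u₀*x^10 + (413256:ℝ)*u₀*x^8 + (218064:ℝ)*u₀*x^6 + (47432:ℝ)*u₀*x^4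 + (368640:ℝ)*u₁*x^16 + (3041280:ℝ)*u₁*x^14 + (10350720:ℝ)*u₁*x^12 + (18596160:ℝ)*u₁*x^10 + (18596520:ℝ)*u₁*x^8 + (9812880:ℝ)*u₁*x^6 + (2134440:ℝ)*u₁*x^4 + (-49152:ℝ)*u₂*x^16 + (-405504:ℝ)*u₂*x^14 + (-1380096:ℝ)*u₂*x^12 + (-2479488:ℝ)*u₂*x^10 + (-2479536:ℝ)*u₂*x^8 + (-1308384:ℝ)*u₂*x^6 + (-284592:ℝ)*u₂*x^4 + (163840:ℝ)*x^17 + (2580480:ℝ)*x^16*e + (-1179648:ℝ)*x^16 + (1351680:ℝ)*x^15 + (21288960:ℝ)*x^14*e + (-9732096:ℝ)*x^14 + (4600320:ℝ)*x^13 + (72455040:ℝ)*x^12*e + (-33122304:ℝ)*x^12 + (8264960:ℝ)*x^11 + (130173120:ℝ)*x^10*e + (-59507712:ℝ)*x^10 + (8265120:ℝ)*x^9 + (130175640:ℝ)*x^8*e + (-59508864:ℝ)*x^8 + (4361280:ℝ)*x^7 + (68690160:ℝ)*x^6*e + (-31401216:ℝ)*x^6 + (948640:ℝ)*x^5 + (14941080:ℝ)*x^4*e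 + (-6830208:ℝ)*x^4)*h4 + ((1638400:ℝ)*u₀*x^18 + (15687680:ℝ)*u₀*x^16 + (63912960:ℝ)*u₀*x^14 + (143603840:ℝ)*u₀*x^12 + (192161920:ℝ)*u₀*x^10 + (153125640:ℝ)*u₀*x^8 + (67273360:ℝ)*u₀*x^6 + (12569480:ℝ)*u₀*x^4 + (-1843200:ℝ)*u₁*x^16 + (-15206400:ℝ)*u₁*x^14 + (-51753600:ℝ)*u₁*x^12 + (-92980800:ℝ)*u₁*x^10 + (-92982600:ℝ)*u₁*x^8 + (-49064400:ℝ)*u₁*x^6 + (-10672200:ℝ)*u₁*x^4 + (-1638400:ℝ)*x^19 + (-19251200:ℝ)*x^17 + (-24698880:ℝ)*x^16*e + (11796480:ℝ)*x^16 + (-93312000:ℝ)*x^15 + (-203765760:ℝ)*x^14*e + (97320960:ℝ)*x^14 + (-243660800:ℝ)*x^13 + (-693498240:ℝ)*x^12*e + (331223040:ℝ)*x^12 + (-371924800:ℝ)*x^11 + (-1245942720:ℝ)*x^10*e + (595077120:ℝ)*x^10 + (-332892000:ℝ)*x^9 + (-1245966840:ℝ)*x^8*e + (595088640:ℝ)*x^8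 + (-162131200:ℝ)*x^7 + (-657462960:ℝ)*x^6*e + (314012160:ℝ)*x^6 + (-33202400:ℝ)*x^5 + (-143007480:ℝ)*x^4*e + (68302080:ℝ)*x^4)*h5 + ((-204800:ℝ)*u₀*x^14 + (-1054720:ℝ)*u₀*x^12 + (-1623424:ℝ)*u₀*x^10 + (114656:ℝ)*u₀*x^8 + (2256216:ℝ)*u₀*x^6 + (1198586:ℝ)*u₀*x^4 + (-708470:ℝ)*u₀*x^2 + (-539000:ℝ)*u₀ + (204800:ℝ)*x^15 + (1843200:ℝ)*x^13 + (-1474560:ℝ)*x^12 + (6138496:ℝ)*x^11 + (-6838272:ℝ)*x^10 + (8523264:ℝ)*x^9 + (-9729792:ℝ)*x^8 + (2421640:ℝ)*x^7 + (-1360512:ℝ)*x^6 + (-5092856:ℝ)*x^5 + (6720048:ℝ)*x^4 + (-4151855:ℝ)*x^3 + (3714480:ℝ)*x^2 + (-633500:ℝ)*x)*hL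
    exact (mul_eq_zero.mp hp).resolve_left hx2
end

section
/- Let u₀, u₁, x, e be positive real numbers with 5x^4 + 2x^2 − 2 ≠ 0, satisfying the four equations: (i) −4u₀ + 36ex^2 − 5u₀x^2 = 0; (ii) −u₁^2 − 7x^2 + 72eu₁x^2 − 10u₁^2x^2 = 0; (iii) −126 + 252e + u₀ + 48u₁ + 14x = 0; (iv) 4u₀ + 24u₁ − 56x + 252ex^2 − 35x^3 = 0. Then x = 1, or x = 2/7, or 6250x^8 − 15750x^7 + 27125x^6 − 41175x^5 + 36030x^4 − 34560x^3 + 17248x^2 − 9216x + 2048 = 0. -/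
theorem stmt_16 (u₀ u₁ x e : ℝ)
    (hu₀ : 0 < u₀) (hu₁ : 0 < u₁) (hx : 0 < x) (he : 0 < e)
    (hnd : 5*x^4 + 2*x^2 - 2 ≠ 0)
    (h1 : -4*u₀ + 36*e*x^2 - 5*u₀*x^2 = 0)
    (h2 : -u₁^2 - 7*x^2 + 72*e*u₁*x^2 - 10*u₁^2*x^2 = 0)
    (h3 : -126 + 252*e + u₀ + 48*u₁ + 14*x = 0)
    (h4 : 4*u₀ + 24*u₁ - 56*x + 252*e*x^2 - 35*x^3 = 0) :
    x = 1 ∨ x = 2/7 ∨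
      6250*x^8 - 15750*x^7 + 27125*x^6 - 41175*x^5 + 36030*x^4
        - 34560*x^3 + 17248*x^2 - 9216*x + 2048 = 0 := by
  -- eliminate e from h1 using h3
  have hS2 : u₀*(28+36*x^2) - x^2*(126-48*u₁-14*x) = 0 := by
    linear_combination (-7)*h1 + x^2*h3
  -- eliminate e, u₀ from h4 : linear relation for u₁
  have hT : (672 - 672*x^2 - 1680*x^4)*u₁
      + (-1568*x + 4032*x^2 - 3444*x^3 + 4410*x^4 - 1750*x^5) = 0 := by
    linear_combination (28+36*x^2)*h4 - (28+36*x^2)*x^2*h3 - (4-x^2)*hS2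
  -- eliminate e, u₀ from h2 : quadratic relation for u₁
  have hV : (-196 - 4900*x^2 - 5880*x^4)*u₁^2
      + (7056*x^2 - 784*x^3 + 8820*x^4 - 980*x^5)*u₁
      + (-1372*x^2 - 1764*x^4) = 0 := by
    linear_combination 7*(28+36*x^2)*h2 - 2*u₁*x^2*(28+36*x^2)*h3 + 2*u₁*x^2*hS2
  -- resultant: eliminate u₁
  have hP : ((x-1)*((7*x-2)*(6250*x^8 - 15750*x^7 + 27125*x^6 - 41175*x^5 + 36030*x^4
        - 34560*x^3 + 17248*x^2 - 9216*x + 2048))) * (345744*x^4 + 268912*x^2) = 0 := by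
    linear_combination (-(672 - 672*x^2 - 1680*x^4)^2)*hV
      + ((-196 - 4900*x^2 - 5880*x^4)*((672 - 672*x^2 - 1680*x^4)*u₁
          - (-1568*x + 4032*x^2 - 3444*x^3 + 4410*x^4 - 1750*x^5))
         + (7056*x^2 - 784*x^3 + 8820*x^4 - 980*x^5)*(672 - 672*x^2 - 1680*x^4))*hT
  have hfac : (345744*x^4 + 268912*x^2) ≠ 0 := by positivity
  have hprod := (mul_eq_zero.mp hP).resolve_right hfac
  rcases mul_eq_zero.mp hprod with h | h
  · left; linarith
  · rcases mul_eq_zero.mp h with h | h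
    · right; left; linarith
    · right; right; exact h
end

section
/- Let u₀, u₁, x, e be positive real numbers with 14x^4 + 5x^2 − 7 ≠ 0, satisfying the four equations: (i) −7u₀ + 60ex^2 − 8u₀x^2 = 0; (ii) −u₁^2 − 6x^2 + 60eu₁x^2 − 8u₁^2x^2 = 0; (iii) −240 + 480e + u₀ + 91u₁ + 28x = 0; (iv) u₀ + 13u₁ − 28x + 120ex^2 − 16x^3 = 0. Then x = 1, or x = 7/23, or 11904x^8 − 30720x^7 + 56144x^6 − 86400x^5 + 80752x^4 − 79440x^3 + 42853x^2 − 23850x + 6293 = 0. -/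
theorem stmt_17 (u₀ u₁ x e : ℝ)
    (hu₀ : 0 < u₀) (hu₁ : 0 < u₁) (hx : 0 < x) (he : 0 < e)
    (hnd : 14*x^4 + 5*x^2 - 7 ≠ 0)
    (h1 : -7*u₀ + 60*e*x^2 - 8*u₀*x^2 = 0)
    (h2 : -u₁^2 - 6*x^2 + 60*e*u₁*x^2 - 8*u₁^2*x^2 = 0)
    (h3 : -240 + 480*e + u₀ + 91*u₁ + 28*x = 0)
    (h4 : u₀ + 13*u₁ - 28*x + 120*e*x^2 - 16*x^3 = 0) :
    x = 1 ∨ x = 7/23 ∨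
      11904*x^8 - 30720*x^7 + 56144*x^6 - 86400*x^5 + 80752*x^4
        - 79440*x^3 + 42853*x^2 - 23850*x + 6293 = 0 := by
  have eqU1 : 13*(14*x^4+5*x^2-7)*u₁ +
      (186*x^5-480*x^4+392*x^3-450*x^2+196*x) = 0 := by
    linear_combination ((15+16*x^2)/8)*x^2*h3 - (15+16*x^2)*h1
      - ((56+65*x^2)/8)*h4 + ((56+65*x^2)/4)*h1
  have eqA : (-(128*x^4+240*x^2+106))*u₁^2 + (128*x^5+336*x^3+196*x)*u₁
      - (96*x^4+90*x^2) = 0 := by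
    linear_combination (15+16*x^2)*h2 - (15+16*x^2)*u₁*h1
      - u₁*(7+8*x^2)*h4 + 2*u₁*(7+8*x^2)*h1
  have hk : (-2*x^2*(16*x^2+15)) * ((x-1)*(23*x-7)*
      (11904*x^8 - 30720*x^7 + 56144*x^6 - 86400*x^5 + 80752*x^4
        - 79440*x^3 + 42853*x^2 - 23850*x + 6293)) = 0 := by
    linear_combination 169*(14*x^4+5*x^2-7)^2*eqA
      - (13*(-(128*x^4+240*x^2+106))*(14*x^4+5*x^2-7)*u₁
         - (-(128*x^4+240*x^2+106))*(186*x^5-480*x^4+392*x^3-450*x^2+196*x)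
         + 13*(128*x^5+336*x^3+196*x)*(14*x^4+5*x^2-7))*eqU1
  have hc : (-2*x^2*(16*x^2+15)) ≠ 0 := by
    nlinarith [sq_nonneg x, sq_nonneg (x^2), hx]
  have key : (x-1)*(23*x-7)*
      (11904*x^8 - 30720*x^7 + 56144*x^6 - 86400*x^5 + 80752*x^4
        - 79440*x^3 + 42853*x^2 - 23850*x + 6293) = 0 :=
    (mul_eq_zero.mp hk).resolve_left hc
  rcases mul_eq_zero.mp key with h | h
  · rcases mul_eq_zero.mp h with h | h
    · left; linarith
    · right; left; linarith
  · right; right; exact h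
end

section
/- Let u₀, u₁, x, e be positive real numbers with 7x^4 + 19x^2 − 28 ≠ 0, satisfying the four equations: (i) −7u₀ + 36ex^2 − 2u₀x^2 = 0; (ii) −2u₁^2 − 5x^2 + 36eu₁x^2 − 2u₁^2x^2 = 0; (iii) −72 + 144e + u₀ + 21u₁ + 14x = 0; (iv) u₀ + 6u₁ − 14x + 36ex^2 − 2x^3 = 0. Then x = 1 or x = 7/11. -/
theorem stmt_18 (u₀ u₁ x e : ℝ)
    (hu₀ : 0 < u₀) (hu₁ : 0 < u₁) (hx : 0 < x) (he : 0 < e)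
    (hnd : 7*x^4 + 19*x^2 - 28 ≠ 0)
    (h1 : -7*u₀ + 36*e*x^2 - 2*u₀*x^2 = 0)
    (h2 : -2*u₁^2 - 5*x^2 + 36*e*u₁*x^2 - 2*u₁^2*x^2 = 0)
    (h3 : -72 + 144*e + u₀ + 21*u₁ + 14*x = 0)
    (h4 : u₀ + 6*u₁ - 14*x + 36*e*x^2 - 2*x^3 = 0) :
    x = 1 ∨ x = 7/11 := by
  have hD : (0:ℝ) < 7 + 2*x^2 := by positivity
  have key1 : 36*e*x^2*(7*x^4+19*x^2-28) = x^2*(7*x^3+63*x-72)*(7+2*x^2) := by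
    linear_combination ((7+2*x^2)*x^2*(7/2))*h4 - ((7+2*x^2)*x^2)*h3 + (5*x^2/2)*h1
  have key0 : u₀*(7*x^4+19*x^2-28)*(7+2*x^2) = x^2*(7*x^3+63*x-72)*(7+2*x^2) := by
    linear_combination key1 - (7*x^4+19*x^2-28)*h1
  have key0c : u₀*(7*x^4+19*x^2-28) = x^2*(7*x^3+63*x-72) :=
    mul_right_cancel₀ (ne_of_gt hD) key0
  have key2 : 6*u₁*(7*x^4+19*x^2-28)
      = (14*x+2*x^3)*(7*x^4+19*x^2-28) - x^2*(7*x^3+63*x-72)*(8+2*x^2) := by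
    linear_combination (7*x^4+19*x^2-28)*h4 - key1 - key0c
  have hbig : (-8)*(x^2*((x-1)*(11*x-7))*(46*x^8-144*x^7+767*x^6-1728*x^5
      +4116*x^4-6696*x^3+8119*x^2-8352*x+4004)) = 0 := by
    linear_combination (18*(7*x^4+19*x^2-28)^2)*h2 - (3*(6*u₁*(7*x^4+19*x^2-28)))*key1
      + ((1+x^2)*((6*u₁*(7*x^4+19*x^2-28))
        + ((14*x+2*x^3)*(7*x^4+19*x^2-28) - x^2*(7*x^3+63*x-72)*(8+2*x^2)))
        - 3*x^2*(7*x^3+63*x-72)*(7+2*x^2))*key2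
  have hO : (0:ℝ) < 46*x^8-144*x^7+767*x^6-1728*x^5+4116*x^4-6696*x^3+8119*x^2-8352*x+4004 := by
    have hid : 46*x^8-144*x^7+767*x^6-1728*x^5+4116*x^4-6696*x^3+8119*x^2-8352*x+4004
        = (1/4003)*(4003 - 4176*x + 321*x^2 + 154*x^3 - 22*x^4)^2
        + (1/49987270356)*(12487452*x - 12678010*x^2 + 406927*x^3 + 724740*x^4)^2
        + (1/40379810836778580)*(6467261830*x^2 - 6101009851*x^3 + 396952332*x^4)^2
        + (1/3302437866036840813270)*(510639270969*x^3 - 110445933148*x^4)^2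
        + (13672622277881/510639270969)*(x^4)^2
        + (1 + x^2 + x^4 + x^6 + x^8) := by ring
    rw [hid]; positivity
  have hx2 : (0:ℝ) < x^2 := by positivity
  have hP : x^2*((x-1)*(11*x-7))*(46*x^8-144*x^7+767*x^6-1728*x^5
      +4116*x^4-6696*x^3+8119*x^2-8352*x+4004) = 0 := by
    linear_combination (-1/8)*hbig
  have hz : (x-1)*(11*x-7) = 0 := by
    rcases mul_eq_zero.mp hP with h | h
    · rcases mul_eq_zero.mp h with h' | h'
      · exact absurd h' (ne_of_gt hx2)
      · exact h'
    · exact absurd h (ne_of_gt hO)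
  rcases mul_eq_zero.mp hz with h | h
  · left; linarith
  · right; linarith
end
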